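/- For d ≥ 1, ε > 0, and f, g ∈ ℝ^d, the Fourier-type transform of the regularized symplectic Feynman weight against standard Gaussian measure satisfies: (2π)^d ∫_{ℝ^{2d}} exp(i(⟨a,f⟩ + ⟨b,g⟩)) Φ(a,b) dμ(a,b) = (2π/√(ε²+1))^d · exp(-(ε(|f|² + |g|²) + 2i⟨f,g⟩)/(2(ε²+1))), where Φ(a,b) = exp(-(1/2)⟨(a,b), K_ε(a,b)⟩) with K_ε = -((1-ε)Id_{ℝ^{2d}} + i(0, Id; Id, 0)), and μ is the standard Gaussian measure on ℝ^{2d}. -/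

import Mathlib

open MeasureTheory Real Complex ProbabilityTheory
open scoped NNReal ENNReal


lemma integral_gaussianReal_cpx (h : ℝ → ℂ) :
    ∫ x, h x ∂(gaussianReal 0 1) = ∫ x : ℝ, (gaussianPDFReal 0 1 x : ℂ) * h x := by
  rw [gaussianReal_of_var_ne_zero 0 one_ne_zero]
  rw [show gaussianPDF 0 1 = fun x => ((Real.toNNReal (gaussianPDFReal 0 1 x) : ℝ≥0) : ℝ≥0∞)
    from rfl]
  rw [integral_withDensity_eq_integral_smul ((measurable_gaussianPDFReal 0 1).real_toNNReal) h]
  congr 1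
  ext x
  rw [NNReal.smul_def, Real.coe_toNNReal _ (gaussianPDFReal_nonneg 0 1 x), Complex.real_smul]

lemma integrable_gaussianReal_iff {h : ℝ → ℝ} :
    Integrable h (gaussianReal 0 1) ↔
      Integrable (fun x => gaussianPDFReal 0 1 x * h x) volume := by
  rw [gaussianReal_of_var_ne_zero 0 one_ne_zero]
  rw [show gaussianPDF 0 1 = fun x => ((Real.toNNReal (gaussianPDFReal 0 1 x) : ℝ≥0) : ℝ≥0∞)
    from rfl]
  rw [integrable_withDensity_iff_integrable_smul
    ((measurable_gaussianPDFReal 0 1).real_toNNReal)]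
  simp_rw [NNReal.smul_def, Real.coe_toNNReal _ (gaussianPDFReal_nonneg 0 1 _), smul_eq_mul]

lemma my_pi_integral {E : Type*} [MeasurableSpace E] (μ : Measure E) [SigmaFinite μ]
    {n : ℕ} (f : Fin n → E → ℂ) :
    ∫ x : Fin n → E, ∏ i, f i (x i) ∂(Measure.pi fun _ => μ) = ∏ i, ∫ x, f i x ∂μ := by
  induction n with
  | zero => simp [Measure.pi_of_empty, measureReal_def, Measure.pi_univ]
  | succ n ih =>
      calc
        _ = ∫ x : E × (Fin n → E), f 0 x.1 * ∏ i : Fin n, f (Fin.succ i) (x.2 i)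
              ∂(μ.prod (Measure.pi fun _ => μ)) := by
          rw [← ((measurePreserving_piFinSuccAbove (fun _ : Fin (n+1) => μ) 0).symm).integral_comp']
          simp [MeasurableEquiv.piFinSuccAbove_symm_apply, Fin.insertNthEquiv,
            Fin.prod_univ_succ, Fin.insertNth_zero, Fin.zero_succAbove, Fin.cons_zero,
            Fin.cons_succ]
        _ = (∫ x, f 0 x ∂μ) * ∏ i : Fin n, ∫ x, f (Fin.succ i) x ∂μ := by
          rw [← ih, ← integral_prod_mul]
        _ = ∏ i, ∫ x, f i x ∂μ := by rw [Fin.prod_univ_succ]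

lemma gaussA {t : ℝ} (ht : 0 < t) (c : ℂ) :
    ∫ x, Complex.exp ((((1 - t)/2 : ℝ) : ℂ) * x^2 + c * x) ∂(gaussianReal 0 1)
      = ((Real.sqrt t)⁻¹ : ℝ) * Complex.exp (c^2 / (2*t)) := by
  rw [integral_gaussianReal_cpx]
  have hpdf : ∀ x : ℝ, (gaussianPDFReal 0 1 x : ℂ) *
      Complex.exp ((((1 - t)/2 : ℝ) : ℂ) * x^2 + c * x)
      = ((Real.sqrt (2*π))⁻¹ : ℝ) *
        Complex.exp (((-(t/2) : ℝ) : ℂ) * x^2 + c * x + 0) := by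
    intro x
    rw [gaussianPDFReal]
    push_cast
    rw [mul_one, mul_assoc, ← Complex.exp_add]
    congr 2
    ring
  rw [integral_congr_ae (Filter.Eventually.of_forall hpdf), integral_const_mul,
    integral_cexp_quadratic (by simp; positivity) c 0]
  have h1 : -(((-(t/2) : ℝ)) : ℂ) = ((t/2 : ℝ) : ℂ) := by push_cast; ring
  rw [h1]
  have h2 : ((π : ℂ) / ((t/2 : ℝ) : ℂ)) = ((2*π/t : ℝ) : ℂ) := by
    push_cast
    field_simp
  rw [h2, show ((1:ℂ)/2) = ((1/2 : ℝ) : ℂ) by norm_num,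
    ← Complex.ofReal_cpow (by positivity) (1/2 : ℝ),
    ← Real.sqrt_eq_rpow, Real.sqrt_div (by positivity : (0:ℝ) ≤ 2*π) t]
  have ht' : (t : ℂ) ≠ 0 := Complex.ofReal_ne_zero.mpr ht.ne'
  have hE : (0 : ℂ) - c^2/(4 * ((-(t/2) : ℝ) : ℂ)) = c^2/(2*(t:ℂ)) := by
    push_cast
    field_simp
    ring
  rw [hE]
  have hs : Real.sqrt (2*π) ≠ 0 := by positivity
  push_cast
  rw [← mul_assoc]
  congr 1
  have h2' : Complex.ofReal (Real.sqrt 2) * Complex.ofReal (Real.sqrt π) ≠ 0 := by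
    simp [Real.sqrt_eq_zero', Real.pi_pos.le]
  field_simp

lemma key2 {ε : ℝ} (hε : 0 < ε) (f g : ℝ) :
    ∫ p : ℝ × ℝ, Complex.exp (Complex.I*(p.1*f) + Complex.I*(p.2*g)
        + (((1-ε)/2 : ℝ):ℂ)*(p.1^2+p.2^2) + Complex.I*(p.1*p.2))
        ∂((gaussianReal 0 1).prod (gaussianReal 0 1))
      = (((Real.sqrt (ε^2+1))⁻¹ : ℝ) : ℂ) *
        Complex.exp (-(((ε*(f^2+g^2) : ℝ) : ℂ) + 2*Complex.I*((f*g : ℝ):ℂ))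
          / (2*((ε^2+1 : ℝ):ℂ))) := by
  have hεC : (ε : ℂ) ≠ 0 := Complex.ofReal_ne_zero.mpr hε.ne'
  have hε1 : ((ε:ℂ)^2 + 1) ≠ 0 := by
    have := Complex.ofReal_ne_zero.mpr (by positivity : (ε^2+1 : ℝ) ≠ 0)
    push_cast at this
    exact this
  -- integrability of the 1d majorant
  have hφ : Integrable (fun x : ℝ => Real.exp (((1-ε)/2)*x^2)) (gaussianReal 0 1) := by
    rw [integrable_gaussianReal_iff]
    apply ((integrable_exp_neg_mul_sq (half_pos hε)).const_mul ((Real.sqrt (2*π))⁻¹)).congr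
    apply Filter.Eventually.of_forall
    intro x
    simp only [gaussianPDFReal, NNReal.coe_one, mul_one]
    rw [mul_assoc, ← Real.exp_add]
    congr 1
    rw [Real.exp_eq_exp]
    push_cast
    ring
  -- integrability of the integrand
  have hInt : Integrable (fun p : ℝ × ℝ => Complex.exp (Complex.I*(p.1*f) + Complex.I*(p.2*g)
        + (((1-ε)/2 : ℝ):ℂ)*(p.1^2+p.2^2) + Complex.I*(p.1*p.2)))
        ((gaussianReal 0 1).prod (gaussianReal 0 1)) := by
    apply Integrable.mono' (hφ.mul_prod hφ)
    · apply Continuous.aestronglyMeasurable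
      fun_prop
    · apply Filter.Eventually.of_forall
      intro p
      rw [Complex.norm_exp]
      apply le_of_eq
      rw [← Real.exp_add]
      congr 1
      simp [Complex.add_re, Complex.mul_re, Complex.mul_im, ← Complex.ofReal_pow]
      ring
  rw [integral_prod _ hInt]
  have inner : ∀ x : ℝ, (∫ y : ℝ, Complex.exp (Complex.I*((x:ℂ)*f) + Complex.I*((y:ℂ)*g)
        + (((1-ε)/2 : ℝ):ℂ)*((x:ℂ)^2+(y:ℂ)^2) + Complex.I*((x:ℂ)*(y:ℂ))) ∂(gaussianReal 0 1))
      = Complex.exp (Complex.I*((x:ℂ)*f) + (((1-ε)/2 : ℝ):ℂ)*(x:ℂ)^2) *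
        ((((Real.sqrt ε)⁻¹ : ℝ):ℂ) *
          Complex.exp ((Complex.I*((g:ℂ)+(x:ℂ)))^2 / (2*(ε:ℂ)))) := by
    intro x
    have step : ∀ y : ℝ, Complex.exp (Complex.I*((x:ℂ)*f) + Complex.I*((y:ℂ)*g)
        + (((1-ε)/2 : ℝ):ℂ)*((x:ℂ)^2+(y:ℂ)^2) + Complex.I*((x:ℂ)*(y:ℂ)))
        = Complex.exp (Complex.I*((x:ℂ)*f) + (((1-ε)/2 : ℝ):ℂ)*(x:ℂ)^2) *
          Complex.exp ((((1-ε)/2 : ℝ):ℂ)*(y:ℂ)^2 + (Complex.I*((g:ℂ)+(x:ℂ)))*(y:ℂ)) := by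
      intro y
      rw [← Complex.exp_add]
      congr 1
      push_cast
      ring
    rw [integral_congr_ae (Filter.Eventually.of_forall step), integral_const_mul,
      gaussA hε (Complex.I*((g:ℂ)+(x:ℂ)))]
  rw [integral_congr_ae (Filter.Eventually.of_forall inner)]
  have ht' : 0 < (ε^2+1)/ε := by positivity
  have expand : ∀ x : ℝ, Complex.exp (Complex.I*((x:ℂ)*f) + (((1-ε)/2 : ℝ):ℂ)*(x:ℂ)^2) *
        ((((Real.sqrt ε)⁻¹ : ℝ):ℂ) *
          Complex.exp ((Complex.I*((g:ℂ)+(x:ℂ)))^2 / (2*(ε:ℂ))))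
      = (((Real.sqrt ε)⁻¹ : ℝ):ℂ) * ((Complex.exp ((-(g^2/(2*ε)) : ℝ) : ℂ)) *
          Complex.exp ((((1-(ε^2+1)/ε)/2 : ℝ):ℂ)*(x:ℂ)^2
            + (Complex.I*(f:ℂ) - ((g/ε : ℝ):ℂ))*(x:ℂ))) := by
    intro x
    rw [mul_left_comm]
    congr 1
    rw [← Complex.exp_add, ← Complex.exp_add]
    congr 1
    push_cast
    field_simp
    simp only [sub_sq, mul_pow, Complex.I_sq]
    ring
  rw [integral_congr_ae (Filter.Eventually.of_forall expand), integral_const_mul,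
    integral_const_mul, gaussA ht' (Complex.I*(f:ℂ) - ((g/ε : ℝ):ℂ))]
  rw [← mul_assoc]
  have hsc : (((Real.sqrt ε)⁻¹ : ℝ):ℂ) * Complex.exp ((-(g^2/(2*ε)) : ℝ) : ℂ) *
        ((((Real.sqrt ((ε^2+1)/ε))⁻¹ : ℝ):ℂ) *
          Complex.exp ((Complex.I*(f:ℂ) - ((g/ε : ℝ):ℂ))^2 / (2*(((ε^2+1)/ε : ℝ):ℂ))))
      = (((Real.sqrt (ε^2+1))⁻¹ : ℝ) : ℂ) *
        Complex.exp (-(((ε*(f^2+g^2) : ℝ) : ℂ) + 2*Complex.I*((f*g : ℝ):ℂ))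
          / (2*((ε^2+1 : ℝ):ℂ))) := by
    have hss : Real.sqrt ε * Real.sqrt ((ε^2+1)/ε) = Real.sqrt (ε^2+1) := by
      rw [← Real.sqrt_mul hε.le]
      congr 1
      field_simp
    rw [mul_assoc, mul_left_comm (Complex.exp _), ← mul_assoc, ← Complex.ofReal_mul,
      ← mul_inv, hss, mul_assoc, ← Complex.exp_add]
    congr 2
    push_cast
    field_simp
    simp only [sub_sq, mul_pow, Complex.I_sq]
    ring
  rw [mul_assoc, mul_assoc] at hsc ⊢
  exact hsc


theorem stmt1 (d : ℕ) (hd : 1 ≤ d) (ε : ℝ) (hε : 0 < ε) (f g : Fin d → ℝ) :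
    -- μ : standard Gaussian measure on ℝ^{2d} = ℝ^d × ℝ^d
    -- Φ(a,b) = exp(-(1/2)⟨(a,b), K_ε (a,b)⟩) with
    -- ⟨(a,b), K_ε (a,b)⟩ = -((1-ε)(|a|²+|b|²) + 2i⟨a,b⟩)
    ((2 * Real.pi : ℂ) ^ d) *
      ∫ p : (Fin d → ℝ) × (Fin d → ℝ),
        Complex.exp (Complex.I * (((∑ μ, p.1 μ * f μ : ℝ) : ℂ) + ((∑ μ, p.2 μ * g μ : ℝ) : ℂ))) *
        Complex.exp (-(1 / 2 : ℂ) *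
          (-(((1 - ε : ℝ) : ℂ) * (((∑ μ, p.1 μ ^ 2 : ℝ) : ℂ) + ((∑ μ, p.2 μ ^ 2 : ℝ) : ℂ))
             + 2 * Complex.I * ((∑ μ, p.1 μ * p.2 μ : ℝ) : ℂ))))
        ∂((Measure.pi fun _ : Fin d => gaussianReal 0 1).prod
           (Measure.pi fun _ : Fin d => gaussianReal 0 1))
    = ((2 * Real.pi / Real.sqrt (ε ^ 2 + 1) : ℝ) : ℂ) ^ d *
      Complex.exp (-((((ε * ((∑ μ, f μ ^ 2) + (∑ μ, g μ ^ 2)) : ℝ) : ℂ)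
          + 2 * Complex.I * ((∑ μ, f μ * g μ : ℝ) : ℂ)) / (2 * ((ε ^ 2 + 1 : ℝ) : ℂ)))) := by
  set Fc : Fin d → ℝ × ℝ → ℂ := fun μ' r => Complex.exp (Complex.I*((r.1 : ℂ)*(f μ' : ℂ))
      + Complex.I*((r.2 : ℂ)*(g μ' : ℂ))
      + (((1-ε)/2 : ℝ):ℂ)*((r.1 : ℂ)^2+(r.2 : ℂ)^2)
      + Complex.I*((r.1 : ℂ)*(r.2 : ℂ))) with hFc
  have step1 : ∀ p : (Fin d → ℝ) × (Fin d → ℝ),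
      Complex.exp (Complex.I * (((∑ μ, p.1 μ * f μ : ℝ) : ℂ) + ((∑ μ, p.2 μ * g μ : ℝ) : ℂ))) *
      Complex.exp (-(1 / 2 : ℂ) *
        (-(((1 - ε : ℝ) : ℂ) * (((∑ μ, p.1 μ ^ 2 : ℝ) : ℂ) + ((∑ μ, p.2 μ ^ 2 : ℝ) : ℂ))
           + 2 * Complex.I * ((∑ μ, p.1 μ * p.2 μ : ℝ) : ℂ))))
      = ∏ μ, Fc μ (p.1 μ, p.2 μ) := by
    intro p
    simp only [hFc]
    rw [← Complex.exp_add, ← Complex.exp_sum]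
    congr 1
    push_cast
    simp only [Finset.sum_add_distrib, ← Finset.mul_sum]
    ring
  rw [integral_congr_ae (Filter.Eventually.of_forall step1)]
  rw [← (measurePreserving_arrowProdEquivProdArrow ℝ ℝ (Fin d)
    (fun _ => gaussianReal 0 1) (fun _ => gaussianReal 0 1)).integral_comp']
  have step2 : ∀ q : Fin d → ℝ × ℝ,
      (∏ μ, Fc μ (((MeasurableEquiv.arrowProdEquivProdArrow ℝ ℝ (Fin d)) q).1 μ,
        ((MeasurableEquiv.arrowProdEquivProdArrow ℝ ℝ (Fin d)) q).2 μ))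
      = ∏ μ, Fc μ (q μ) := fun q => rfl
  rw [integral_congr_ae (Filter.Eventually.of_forall step2),
    my_pi_integral ((gaussianReal 0 1).prod (gaussianReal 0 1)) Fc]
  have step3 : ∀ μ : Fin d, (∫ r : ℝ × ℝ, Fc μ r ∂((gaussianReal 0 1).prod (gaussianReal 0 1)))
      = (((Real.sqrt (ε^2+1))⁻¹ : ℝ) : ℂ) *
        Complex.exp (-(((ε*((f μ)^2+(g μ)^2) : ℝ) : ℂ) + 2*Complex.I*((f μ*g μ : ℝ):ℂ))
          / (2*((ε^2+1 : ℝ):ℂ))) := fun μ => key2 hε (f μ) (g μ)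
  rw [Finset.prod_congr rfl (fun μ _ => step3 μ), Finset.prod_mul_distrib,
    Finset.prod_const, Finset.card_univ, Fintype.card_fin, ← Complex.exp_sum]
  have hS : (∑ μ : Fin d, (-((((ε*((f μ)^2+(g μ)^2) : ℝ) : ℂ) + 2*Complex.I*((f μ*g μ : ℝ):ℂ)))
          / (2*((ε^2+1 : ℝ):ℂ))))
      = -((((ε * ((∑ μ, f μ ^ 2) + (∑ μ, g μ ^ 2)) : ℝ) : ℂ)
          + 2 * Complex.I * ((∑ μ, f μ * g μ : ℝ) : ℂ)) / (2 * ((ε ^ 2 + 1 : ℝ) : ℂ))) := by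
    rw [← Finset.sum_div, ← neg_div]
    congr 1
    rw [Finset.sum_neg_distrib]
    congr 1
    push_cast
    simp only [Finset.sum_add_distrib, ← Finset.mul_sum]
  rw [hS, ← mul_assoc, ← mul_pow]
  congr 2
  push_cast
  ring
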